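/- Let (h_t)_{t∈[a,b]} be a real-valued function of t and for n ≥ 0 set t_{n,i} = a + (b−a)·i·2^{−n} for i = 0,…,2^n, X_n = max over i of |h_{t_{n,i}} − h_{t_{n,i−1}}|, and for t ∈ [a,b] let v_n = a + (b−a)·2^{−n}·⌊(t−a)·2^n/(b−a)⌋. If h is continuous on [a,b], then for every t ∈ [a,b], |h_t − h_a| ≤ Σ_{n=1}^∞ X_n. -/

import Mathlib

theorem stmt_6 (a b : ℝ) (hab : a < b) (h : ℝ → ℝ)
    (hc : ContinuousOn h (Set.Icc a b))
    (X : ℕ → ℝ)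
    (hX : ∀ n : ℕ, X n = (Finset.range (2^n)).sup'
      (Finset.nonempty_range_iff.mpr (by positivity))
      (fun i => |h (a + (b-a)*((i:ℝ)+1)/2^n) - h (a + (b-a)*(i:ℝ)/2^n)|)) :
    ∀ t ∈ Set.Icc a b,
      ENNReal.ofReal |h t - h a| ≤ ∑' n : ℕ, ENNReal.ofReal (X (n+1)) := by
  intro t ht
  have hba : (0:ℝ) < b - a := by linarith
  set x : ℝ := (t - a) / (b - a) with hxdef
  have hx0 : 0 ≤ x := div_nonneg (by linarith [ht.1]) hba.le
  have hx1 : x ≤ 1 := by rw [hxdef, div_le_one hba]; linarith [ht.2]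
  have htx : t = a + (b - a) * x := by rw [hxdef, mul_div_assoc', mul_div_cancel_left₀ _ hba.ne']; ring
  set f : ℕ → ℕ := fun n => ⌊x * 2^n⌋₊ with hf
  set k : ℕ → ℕ := fun n => min (f n) (2^n - 1) with hk
  set v : ℕ → ℝ := fun n => a + (b-a) * (k n) / 2^n with hv
  have hpow : ∀ n : ℕ, (0:ℝ) < 2^n := fun n => pow_pos two_pos n
  have hxn0 : ∀ n : ℕ, 0 ≤ x * 2^n := fun n => mul_nonneg hx0 (hpow n).le
  have hfle : ∀ n, f n ≤ 2^n := by
    intro n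
    have h1 : x * 2^n ≤ ((2^n : ℕ) : ℝ) := by
      push_cast
      nlinarith [hpow n]
    exact Nat.floor_le_of_le h1
  have hstep : ∀ n, k (n+1) = 2 * k n ∨ k (n+1) = 2 * k n + 1 := by
    intro n
    have h1 : 2 * f n ≤ f (n+1) := by
      apply Nat.le_floor
      push_cast
      have := Nat.floor_le (hxn0 n)
      rw [pow_succ]
      nlinarith
    have h2 : f (n+1) ≤ 2 * f n + 1 := by
      have h3 : x * 2^(n+1) < ((2 * f n + 2 : ℕ) : ℝ) := by
        push_cast
        have := Nat.lt_floor_add_one (x * 2^n)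
        rw [pow_succ]
        nlinarith
      have h4 := (Nat.floor_lt (hxn0 (n+1))).mpr h3
      simp only [hf] at h4 ⊢
      omega
    have hfn := hfle n
    have hp : (2:ℕ)^(n+1) = 2 * 2^n := by ring
    have hp1 : 1 ≤ (2:ℕ)^n := Nat.one_le_two_pow
    simp only [hk]
    omega
  have hklt : ∀ n, k n < 2^n := by
    intro n
    have hp1 : 1 ≤ (2:ℕ)^n := Nat.one_le_two_pow
    simp only [hk]
    omega
  have hXnn : ∀ n, 0 ≤ X n := by
    intro n
    rw [hX n]
    have hm : (0:ℕ) ∈ Finset.range (2^n) := Finset.mem_range.mpr (by positivity)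
    have := Finset.le_sup'
      (fun i : ℕ => |h (a + (b-a)*((i:ℝ)+1)/2^n) - h (a + (b-a)*(i:ℝ)/2^n)|) hm
    exact le_trans (abs_nonneg _) this
  have habs : ∀ n, |h (v (n+1)) - h (v n)| ≤ X (n+1) := by
    intro n
    have hvn : v n = a + (b-a) * ((2 * k n : ℕ):ℝ) / 2^(n+1) := by
      simp only [hv]
      push_cast
      rw [pow_succ]
      ring
    rcases hstep n with hs | hs
    · have : v (n+1) = v n := by
        rw [hvn]; simp only [hv, hs]
      rw [this]
      simpa using hXnn (n+1)
    · have hvn1 : v (n+1) = a + (b-a) * (((2 * k n : ℕ):ℝ)+1) / 2^(n+1) := by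
        simp only [hv, hs]
        push_cast
        ring
      rw [hX (n+1), hvn, hvn1]
      have hm : 2 * k n ∈ Finset.range (2^(n+1)) :=
        Finset.mem_range.mpr (by have := hklt (n+1); omega)
      exact Finset.le_sup'
        (fun i : ℕ => |h (a + (b-a)*((i:ℝ)+1)/2^(n+1)) - h (a + (b-a)*(i:ℝ)/2^(n+1))|) hm
  have hv0 : v 0 = a := by
    have : k 0 = 0 := by simp [hk, hf]
    simp [hv, this]
  have hkey : ∀ N : ℕ, ENNReal.ofReal |h (v N) - h a| ≤ ∑' n : ℕ, ENNReal.ofReal (X (n+1)) := by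
    intro N
    have htel := Finset.sum_range_sub (fun i => h (v i)) N
    rw [hv0] at htel
    have hb : |h (v N) - h a| ≤ ∑ n ∈ Finset.range N, X (n+1) := by
      rw [← htel]
      refine le_trans (Finset.abs_sum_le_sum_abs _ _) ?_
      exact Finset.sum_le_sum fun n _ => habs n
    calc ENNReal.ofReal |h (v N) - h a|
        ≤ ENNReal.ofReal (∑ n ∈ Finset.range N, X (n+1)) := ENNReal.ofReal_le_ofReal hb
      _ = ∑ n ∈ Finset.range N, ENNReal.ofReal (X (n+1)) :=
          ENNReal.ofReal_sum_of_nonneg fun n _ => hXnn (n+1)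
      _ ≤ ∑' n : ℕ, ENNReal.ofReal (X (n+1)) := ENNReal.sum_le_tsum _
  have hvmem : ∀ n, v n ∈ Set.Icc a b := by
    intro n
    have h2 : ((k n : ℕ):ℝ) ≤ ((2^n : ℕ):ℝ) := Nat.cast_le.mpr (hklt n).le
    push_cast at h2
    have h1 : (0:ℝ) ≤ (k n : ℝ) := Nat.cast_nonneg _
    constructor
    · simp only [hv]
      have : 0 ≤ (b-a) * (k n : ℝ) / 2^n := by positivity
      linarith
    · simp only [hv]
      have h3 : (b-a) * (k n : ℝ) / 2^n ≤ b - a := by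
        rw [div_le_iff₀ (hpow n)]
        nlinarith [hpow n]
      linarith
  have hvt : Filter.Tendsto v Filter.atTop (nhds t) := by
    have hd : ∀ n, |v n - t| ≤ (b - a) * (1/2)^n := by
      intro n
      have hp := hpow n
      have hfl : (k n : ℝ) ≤ x * 2^n := by
        have h1 : (k n : ℝ) ≤ (f n : ℝ) := Nat.cast_le.mpr (min_le_left _ _)
        exact h1.trans (Nat.floor_le (hxn0 n))
      have hfu : x * 2^n ≤ (k n : ℝ) + 1 := by
        rcases le_or_gt (f n) (2^n - 1) with hc' | hc'
        · have hkn : k n = f n := min_eq_left hc'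
          rw [hkn]
          exact (Nat.lt_floor_add_one (x * 2^n)).le
        · have hkn : k n = 2^n - 1 := min_eq_right (by omega)
          have hp1 : 1 ≤ (2:ℕ)^n := Nat.one_le_two_pow
          have hcast : (k n : ℝ) = ((2^n : ℕ):ℝ) - 1 := by
            rw [hkn, Nat.cast_sub hp1]; norm_num
          rw [hcast]
          push_cast
          nlinarith [hpow n]
      have heq : v n - t = (b - a) * (((k n : ℝ) - x * 2^n) / 2^n) := by
        rw [htx]; simp only [hv]; field_simp; ring
      rw [heq, abs_mul, abs_of_pos hba, abs_div, abs_of_pos hp, div_pow, one_pow]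
      have habs1 : |(k n:ℝ) - x*2^n| ≤ 1 := by
        rw [abs_le]; constructor <;> linarith
      have hdv : |(k n:ℝ) - x*2^n| / 2^n ≤ 1 / 2^n := by gcongr
      exact mul_le_mul_of_nonneg_left hdv hba.le
    have h0 : Filter.Tendsto (fun n => (b - a) * (1/2)^n) Filter.atTop (nhds 0) := by
      rw [show (0:ℝ) = (b-a) * 0 by ring]
      exact (tendsto_pow_atTop_nhds_zero_of_lt_one (by norm_num) (by norm_num)).const_mul _
    have hsq : Filter.Tendsto (fun n => v n - t) Filter.atTop (nhds 0) :=
      squeeze_zero_norm (fun n => by simpa using hd n) h0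
    have h3 : Filter.Tendsto (fun n => (v n - t) + t) Filter.atTop (nhds (0 + t)) :=
      hsq.add tendsto_const_nhds
    simpa using h3
  have hht : Filter.Tendsto (fun n => h (v n)) Filter.atTop (nhds (h t)) := by
    refine (hc t ht).tendsto.comp ?_
    rw [tendsto_nhdsWithin_iff]
    exact ⟨hvt, Filter.Eventually.of_forall hvmem⟩
  have hfin : Filter.Tendsto (fun n => ENNReal.ofReal |h (v n) - h a|) Filter.atTop
      (nhds (ENNReal.ofReal |h t - h a|)) :=
    (ENNReal.continuous_ofReal.tendsto _).comp ((hht.sub tendsto_const_nhds).abs)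
  exact le_of_tendsto hfin (Filter.Eventually.of_forall hkey)
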